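/- Let v : ℝᵈ → ℝᵈ be a C¹ bijection with everywhere injective Jacobian, φ strictly convex differentiable, g : ℝᵈ → ℝ with g > 0, and u := ∇φ ∘ v. Then for points x₁,…,xₙ, the unique minimizer μ of x ↦ Σᵢ g(xᵢ) · D_φ(v(x) : v(xᵢ)) is μ = u⁻¹( (Σᵢ g(xᵢ) u(xᵢ)) / (Σᵢ g(xᵢ)) ). -/

import Mathlib

open Set Finset

lemma convex_grad_le {E : Type*} [NormedAddCommGroup E] [InnerProductSpace ℝ E] [CompleteSpace E]
    {φ : E → ℝ} (hconv : ConvexOn ℝ Set.univ φ) {y₀ G : E}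
    (hg : HasGradientAt φ G y₀) (z : E) :
    (inner ℝ (z - y₀) G : ℝ) ≤ φ z - φ y₀ := by
  set d := z - y₀ with hd
  have hline : HasDerivAt (fun t : ℝ => y₀ + t • d) d 0 := by
    simpa using ((hasDerivAt_id (0:ℝ)).smul_const d).const_add y₀
  have hψ : HasDerivAt (fun t : ℝ => φ (y₀ + t • d)) (inner ℝ G d : ℝ) 0 := by
    have hg' : HasFDerivAt φ (InnerProductSpace.toDual ℝ E G) (y₀ + (0:ℝ) • d) := by
      simpa using hg.hasFDerivAt
    have h := hg'.comp_hasDerivAt (0:ℝ) hline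
    simp at h
    exact h
  have hψc : ConvexOn ℝ Set.univ (fun t : ℝ => φ (y₀ + t • d)) := by
    have := hconv.comp_affineMap
      (AffineMap.const ℝ ℝ y₀ + (LinearMap.toSpanSingleton ℝ E d).toAffineMap)
    simp [Function.comp] at this
    exact this
  have h := hψc.le_slope_of_hasDerivAt (mem_univ (0:ℝ)) (mem_univ (1:ℝ)) one_pos hψ
  rw [slope_def_field] at h
  simp only [one_smul, zero_smul, add_zero, div_one] at h
  calc (inner ℝ (z - y₀) G : ℝ) = (inner ℝ G d : ℝ) := by rw [real_inner_comm, hd]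
    _ ≤ _ := by simpa [hd] using h

lemma strictConvex_grad_lt {E : Type*} [NormedAddCommGroup E] [InnerProductSpace ℝ E]
    [CompleteSpace E]
    {φ : E → ℝ} (hconv : StrictConvexOn ℝ Set.univ φ) {y₀ G : E}
    (hg : HasGradientAt φ G y₀) {z : E} (hz : z ≠ y₀) :
    (inner ℝ (z - y₀) G : ℝ) < φ z - φ y₀ := by
  set m : E := (1/2 : ℝ) • y₀ + (1/2 : ℝ) • z with hm
  have hmlt : φ m < (1/2 : ℝ) * φ y₀ + (1/2 : ℝ) * φ z :=
    hconv.2 (mem_univ y₀) (mem_univ z) (Ne.symm hz) (by norm_num) (by norm_num) (by norm_num)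
  have hle : (inner ℝ (m - y₀) G : ℝ) ≤ φ m - φ y₀ := convex_grad_le hconv.convexOn hg m
  have hmy : m - y₀ = (1/2 : ℝ) • (z - y₀) := by
    rw [hm]; module
  rw [hmy, real_inner_smul_left] at hle
  nlinarith [hle, hmlt]

/-- The unique left population minimizer of a `v`-conformal divergence is the
`g`-weighted `u`-mean, where `u = ∇φ ∘ v`. -/
theorem left_population_minimizer_vConformal {d n : ℕ} (hn : 0 < n)
    (φ : EuclideanSpace ℝ (Fin d) → ℝ)
    (gradφ : EuclideanSpace ℝ (Fin d) → EuclideanSpace ℝ (Fin d))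
    (v : EuclideanSpace ℝ (Fin d) → EuclideanSpace ℝ (Fin d))
    (g : EuclideanSpace ℝ (Fin d) → ℝ)
    (xs : Fin n → EuclideanSpace ℝ (Fin d))
    (hconv : StrictConvexOn ℝ Set.univ φ)
    (hsmooth : ContDiff ℝ 2 φ)
    (hgrad : ∀ x, HasGradientAt φ (gradφ x) x)
    (hv : ContDiff ℝ 1 v) (hvbij : Function.Bijective v)
    (hJ : ∀ x, Function.Injective (fderiv ℝ v x))
    (hg : ∀ x, 0 < g x)
    (u : EuclideanSpace ℝ (Fin d) → EuclideanSpace ℝ (Fin d))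
    (hu : ∀ x, u x = gradφ (v x)) (hubij : Function.Bijective u)
    (F : EuclideanSpace ℝ (Fin d) → ℝ)
    (hF : ∀ x, F x = ∑ i, g (xs i) *
      (φ (v x) - φ (v (xs i)) - (inner ℝ (v x - v (xs i)) (gradφ (v (xs i))) : ℝ)))
    (μ₀ : EuclideanSpace ℝ (Fin d))
    (hμ₀ : μ₀ = Function.invFun u ((∑ i, g (xs i))⁻¹ • ∑ i, g (xs i) • u (xs i))) :
    (∀ x, F μ₀ ≤ F x) ∧ ∀ μ, (∀ x, F μ ≤ F x) → μ = μ₀ := by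
  set G : ℝ := ∑ i, g (xs i) with hGdef
  set S : EuclideanSpace ℝ (Fin d) := ∑ i, g (xs i) • u (xs i) with hSdef
  have hGpos : 0 < G := Finset.sum_pos (fun i _ => hg (xs i)) (by
    simpa [Finset.univ_nonempty_iff] using Fin.pos_iff_nonempty.mp hn)
  have huμ₀ : u μ₀ = G⁻¹ • S := by
    rw [hμ₀]; exact Function.invFun_eq (hubij.2 _)
  have hGS : G • u μ₀ = S := by
    rw [huμ₀, smul_smul, mul_inv_cancel₀ hGpos.ne', one_smul]
  -- gradient of φ at v μ₀ is u μ₀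
  have hgradμ₀ : gradφ (v μ₀) = u μ₀ := (hu μ₀).symm
  -- key decomposition
  have key : ∀ x, F x - F μ₀ =
      G * (φ (v x) - φ (v μ₀)) - (inner ℝ (v x - v μ₀) S : ℝ) := by
    intro x
    have hinner : (inner ℝ (v x - v μ₀) S : ℝ)
        = ∑ i, g (xs i) * (inner ℝ (v x - v μ₀) (u (xs i)) : ℝ) := by
      rw [hSdef, inner_sum]
      exact Finset.sum_congr rfl fun i _ => real_inner_smul_right _ _ _
    rw [hF x, hF μ₀, ← Finset.sum_sub_distrib, hGdef, Finset.sum_mul, hinner,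
      ← Finset.sum_sub_distrib]
    refine Finset.sum_congr rfl fun i _ => ?_
    have : (inner ℝ (v x - v (xs i)) (gradφ (v (xs i))) : ℝ)
        - (inner ℝ (v μ₀ - v (xs i)) (gradφ (v (xs i))) : ℝ)
        = (inner ℝ (v x - v μ₀) (u (xs i)) : ℝ) := by
      rw [hu, ← inner_sub_left]
      congr 1
      abel
    linear_combination (-(g (xs i))) * this
  -- the Bregman-type term, with gradient u μ₀
  have hterm : ∀ x, (inner ℝ (v x - v μ₀) S : ℝ) = G * (inner ℝ (v x - v μ₀) (u μ₀) : ℝ) := by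
    intro x
    rw [← hGS, real_inner_smul_right]
  have hgradAt : HasGradientAt φ (u μ₀) (v μ₀) := by
    rw [← hgradμ₀]; exact hgrad (v μ₀)
  constructor
  · intro x
    have hle : (inner ℝ (v x - v μ₀) (u μ₀) : ℝ) ≤ φ (v x) - φ (v μ₀) :=
      convex_grad_le hconv.convexOn hgradAt (v x)
    have := key x
    rw [hterm x] at this
    nlinarith [this, hle, hGpos]
  · intro μ hμ
    by_contra hne
    have hvne : v μ ≠ v μ₀ := fun h => hne (hvbij.1 h)
    have hlt : (inner ℝ (v μ - v μ₀) (u μ₀) : ℝ) < φ (v μ) - φ (v μ₀) :=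
      strictConvex_grad_lt hconv hgradAt hvne
    have h1 := key μ
    rw [hterm μ] at h1
    have h2 : F μ ≤ F μ₀ := hμ μ₀
    nlinarith [h1, hlt, hGpos, h2]
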